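/- For every integer d ≥ 1, the spectrum of the discrete Laplacian Δ, as a bounded operator on ℓ²(ℤᵈ), equals the real segment [−d,d] = {λ ∈ ℂ : Im λ = 0 and |Re λ| ≤ d}. -/

import Mathlib

/-- `L` is the discrete Laplacian on `ℓ²(ℤᵈ)`:
`(Lf)(n) = (1/2)∑_{j=1}^d (f(n+eⱼ) + f(n-eⱼ))`. -/
def IsDiscreteLaplacian (d : ℕ)
    (L : lp (fun _ : Fin d → ℤ => ℂ) 2 →L[ℂ] lp (fun _ : Fin d → ℤ => ℂ) 2) : Prop :=
  ∀ (f : lp (fun _ : Fin d → ℤ => ℂ) 2) (n : Fin d → ℤ),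
    L f n = (1 / 2) * ∑ j : Fin d, (f (n + Pi.single j 1) + f (n - Pi.single j 1))

open scoped ENNReal ComplexConjugate

noncomputable section
variable {ι : Type*}

local notation "⟪" x ", " y "⟫" => @inner ℂ _ _ x y

lemma memℓp_comp_equiv (e : ι ≃ ι) (f : lp (fun _ : ι => ℂ) 2) :
    Memℓp (fun n => f (e n)) 2 := by
  apply memℓp_gen
  have h := (lp.memℓp f)
  rw [memℓp_gen_iff (by norm_num)] at h
  exact e.summable_iff.mpr h

/-- reindexing along an equiv as a linear isometry equiv of `ℓ²`. -/
def shiftL (e : ι ≃ ι) : lp (fun _ : ι => ℂ) 2 ≃ₗᵢ[ℂ] lp (fun _ : ι => ℂ) 2 where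
  toFun f := ⟨fun n => f (e n), memℓp_comp_equiv e f⟩
  invFun f := ⟨fun n => f (e.symm n), memℓp_comp_equiv e.symm f⟩
  map_add' f g := rfl
  map_smul' c f := rfl
  left_inv f := by ext n; simp
  right_inv f := by ext n; simp
  norm_map' f := by
    rw [lp.norm_eq_tsum_rpow (by norm_num), lp.norm_eq_tsum_rpow (by norm_num)]
    congr 1
    exact e.tsum_eq (fun n => ‖f n‖ ^ (2 : ℝ≥0∞).toReal)

@[simp] lemma shiftL_apply (e : ι ≃ ι) (f : lp (fun _ : ι => ℂ) 2) (n : ι) :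
    shiftL e f n = f (e n) := rfl

@[simp] lemma shiftL_symm_apply (e : ι ≃ ι) (f : lp (fun _ : ι => ℂ) 2) (n : ι) :
    (shiftL e).symm f n = f (e.symm n) := rfl

lemma shiftL_inner (e : ι ≃ ι) (f g : lp (fun _ : ι => ℂ) 2) :
    ⟪shiftL e f, g⟫ = ⟪f, (shiftL e).symm g⟫ := by
  rw [lp.inner_eq_tsum, lp.inner_eq_tsum]
  rw [← e.tsum_eq (fun m => ⟪f m, (shiftL e).symm g m⟫)]
  simp


variable {d : ℕ} {L : lp (fun _ : Fin d → ℤ => ℂ) 2 →L[ℂ] lp (fun _ : Fin d → ℤ => ℂ) 2}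

/-- translation by `e_j` -/
def eqv (d : ℕ) (j : Fin d) : (Fin d → ℤ) ≃ (Fin d → ℤ) := Equiv.addRight (Pi.single j 1)

lemma Lf_eq (hL : IsDiscreteLaplacian d L) (f : lp (fun _ : Fin d → ℤ => ℂ) 2) :
    L f = (2 : ℂ)⁻¹ • ∑ j : Fin d, (shiftL (eqv d j) f + (shiftL (eqv d j)).symm f) := by
  ext n
  rw [hL f n]
  rw [lp.coeFn_smul]
  simp only [Pi.smul_apply, lp.coeFn_sum, Finset.sum_apply, lp.coeFn_add, Pi.add_apply,
    shiftL_apply, shiftL_symm_apply, eqv, Equiv.coe_addRight, smul_eq_mul, one_div]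
  refine congrArg _ (Finset.sum_congr rfl fun j _ => ?_)
  congr 1

lemma shiftL_symm_eq (e : ι ≃ ι) : (shiftL e).symm = shiftL e.symm := by
  ext f
  rfl

lemma L_selfadjoint (hL : IsDiscreteLaplacian d L) : IsSelfAdjoint L := by
  rw [ContinuousLinearMap.isSelfAdjoint_iff_isSymmetric]
  intro f g
  simp only [ContinuousLinearMap.coe_coe]
  rw [Lf_eq hL f, Lf_eq hL g]
  rw [inner_smul_left, inner_smul_right]
  have h2 : (starRingEnd ℂ) 2⁻¹ = 2⁻¹ := by rw [map_inv₀]; norm_num [Complex.conj_ofNat]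
  rw [h2, sum_inner, inner_sum]
  refine congrArg _ (Finset.sum_congr rfl fun j _ => ?_)
  rw [inner_add_left, inner_add_right, shiftL_inner, shiftL_symm_eq, shiftL_inner,
    shiftL_symm_eq, Equiv.symm_symm, add_comm]

lemma L_norm_le (hL : IsDiscreteLaplacian d L) : ‖L‖ ≤ d := by
  refine ContinuousLinearMap.opNorm_le_bound _ (by positivity) fun f => ?_
  rw [Lf_eq hL f]
  rw [norm_smul]
  calc ‖(2:ℂ)⁻¹‖ * ‖∑ j : Fin d, (shiftL (eqv d j) f + (shiftL (eqv d j)).symm f)‖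
      ≤ 2⁻¹ * ∑ j : Fin d, ‖shiftL (eqv d j) f + (shiftL (eqv d j)).symm f‖ := by
        gcongr
        · norm_num
        · exact norm_sum_le _ _
    _ ≤ 2⁻¹ * ∑ j : Fin d, (‖f‖ + ‖f‖) := by
        gcongr 2⁻¹ * ?_
        refine Finset.sum_le_sum fun j _ => ?_
        refine (norm_add_le _ _).trans ?_
        rw [(shiftL (eqv d j)).norm_map, (shiftL (eqv d j)).symm.norm_map]
    _ = d * ‖f‖ := by
        rw [Finset.sum_const, Finset.card_univ, Fintype.card_fin]
        ring

lemma spec_subset (hL : IsDiscreteLaplacian d L) :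
    spectrum ℂ L ⊆ {l : ℂ | l.im = 0 ∧ |l.re| ≤ d} := by
  intro z hz
  haveI : Nontrivial (lp (fun _ : Fin d → ℤ => ℂ) 2) := by
    refine ⟨lp.single 2 (0 : Fin d → ℤ) (1 : ℂ), 0, fun h => ?_⟩
    have := congrFun (congrArg (Subtype.val) h) 0
    rw [lp.single_apply_self] at this
    simp at this
  have hre := (L_selfadjoint hL).mem_spectrum_eq_re hz
  have hnorm : ‖z‖ ≤ ‖L‖ := spectrum.norm_le_norm_of_mem hz
  refine ⟨by rw [hre]; exact Complex.ofReal_im _, ?_⟩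
  calc |z.re| ≤ ‖z‖ := Complex.abs_re_le_norm z
    _ = ‖z‖ := rfl
    _ ≤ ‖L‖ := hnorm
    _ ≤ d := L_norm_le hL

lemma norm_sq_eq {κ : Type*} (f : lp (fun _ : κ => ℂ) 2) :
    ‖f‖ ^ 2 = ∑' n, ‖f n‖ ^ 2 := by
  have h := lp.norm_rpow_eq_tsum (p := 2) (by norm_num) f
  have h2 : ((2 : ℝ≥0∞)).toReal = ((2 : ℕ) : ℝ) := by norm_num
  rw [h2] at h
  simpa [Real.rpow_natCast] using h

/-- The box `[a,b]^d` as a finset. -/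
def boxF (d : ℕ) (a b : ℤ) : Finset (Fin d → ℤ) := Fintype.piFinset fun _ => Finset.Icc a b

lemma mem_boxF {d : ℕ} {a b : ℤ} {n : Fin d → ℤ} :
    n ∈ boxF d a b ↔ ∀ j, a ≤ n j ∧ n j ≤ b := by
  simp [boxF, Fintype.mem_piFinset]

lemma card_boxF {d : ℕ} {a b : ℤ} (hab : a ≤ b) :
    (boxF d a b).card = (b + 1 - a).toNat ^ d := by
  simp [boxF, Fintype.card_piFinset, Int.card_Icc]

/-- plane wave cut off to the box `[0, N-1]^d`. -/
def wv (d : ℕ) (θ : ℝ) (N : ℕ) : (Fin d → ℤ) → ℂ :=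
  fun n => if n ∈ boxF d 0 ((N : ℤ) - 1) then
    Complex.exp (((θ * ((∑ j, n j : ℤ) : ℝ) : ℝ) : ℂ) * Complex.I) else 0

lemma wv_norm_le {d : ℕ} (θ : ℝ) (N : ℕ) (n : Fin d → ℤ) : ‖wv d θ N n‖ ≤ 1 := by
  unfold wv
  split_ifs with h
  · rw [Complex.norm_exp_ofReal_mul_I]
  · simp

lemma wv_norm_eq {d : ℕ} (θ : ℝ) (N : ℕ) {n : Fin d → ℤ} (h : n ∈ boxF d 0 ((N : ℤ) - 1)) :
    ‖wv d θ N n‖ = 1 := by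
  unfold wv
  rw [if_pos h, Complex.norm_exp_ofReal_mul_I]

lemma wv_eq_zero {d : ℕ} (θ : ℝ) (N : ℕ) {n : Fin d → ℤ} (h : n ∉ boxF d 0 ((N : ℤ) - 1)) :
    wv d θ N n = 0 := if_neg h

lemma memℓp_wv (d : ℕ) (θ : ℝ) (N : ℕ) : Memℓp (wv d θ N) 2 := by
  apply memℓp_gen
  refine summable_of_ne_finset_zero (s := boxF d 0 ((N : ℤ) - 1)) fun n hn => ?_
  rw [wv_eq_zero θ N hn]
  simp [Real.zero_rpow]

/-- the Weyl vector in `ℓ²`. -/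
def wvL (d : ℕ) (θ : ℝ) (N : ℕ) : lp (fun _ : Fin d → ℤ => ℂ) 2 := ⟨wv d θ N, memℓp_wv d θ N⟩

@[simp] lemma wvL_apply (d : ℕ) (θ : ℝ) (N : ℕ) (n : Fin d → ℤ) :
    wvL d θ N n = wv d θ N n := rfl

lemma norm_wvL_sq (d : ℕ) (θ : ℝ) {N : ℕ} (hN : 1 ≤ N) :
    ‖wvL d θ N‖ ^ 2 = (N : ℝ) ^ d := by
  rw [norm_sq_eq]
  rw [tsum_eq_sum (s := boxF d 0 ((N : ℤ) - 1))
    (fun n hn => by rw [wvL_apply, wv_eq_zero θ N hn]; simp)]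
  rw [Finset.sum_congr rfl fun n hn => by rw [wvL_apply, wv_norm_eq θ N hn, one_pow]]
  rw [Finset.sum_const, card_boxF (by omega), nsmul_eq_mul, mul_one]
  have h3 : ((N : ℤ) - 1 + 1 - 0).toNat = N := by omega
  rw [h3]
  push_cast
  ring

lemma sum_add_single {d : ℕ} (n : Fin d → ℤ) (j : Fin d) :
    (∑ k : Fin d, (n + (Pi.single j 1 : Fin d → ℤ)) k) = (∑ k : Fin d, n k) + 1 := by
  simp [Finset.sum_add_distrib, Finset.sum_pi_single']

lemma sum_sub_single {d : ℕ} (n : Fin d → ℤ) (j : Fin d) :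
    (∑ k : Fin d, (n - (Pi.single j 1 : Fin d → ℤ)) k) = (∑ k : Fin d, n k) - 1 := by
  simp [Finset.sum_sub_distrib, Finset.sum_pi_single']

lemma exp_add_exp_neg (θ : ℝ) :
    Complex.exp ((θ : ℂ) * Complex.I) + Complex.exp (-((θ : ℂ) * Complex.I))
      = 2 * (Real.cos θ : ℂ) := by
  rw [neg_mul_eq_neg_mul, Complex.exp_mul_I, Complex.exp_mul_I]
  rw [Complex.cos_neg, Complex.sin_neg, Complex.ofReal_cos]
  ring

lemma wv_shift {d : ℕ} {θ : ℝ} {N : ℕ} (hN : 3 ≤ N) {n : Fin d → ℤ}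
    (hn : n ∈ boxF d 1 ((N : ℤ) - 2)) (j : Fin d) :
    wv d θ N (n + Pi.single j 1) + wv d θ N (n - Pi.single j 1)
      = 2 * (Real.cos θ : ℂ) * wv d θ N n := by
  rw [mem_boxF] at hn
  have hmem : n ∈ boxF d 0 ((N : ℤ) - 1) := by
    rw [mem_boxF]; intro k; have := hn k; omega
  have hplus : n + Pi.single j 1 ∈ boxF d 0 ((N : ℤ) - 1) := by
    rw [mem_boxF]; intro k
    have := hn k
    simp only [Pi.add_apply, Pi.single_apply]
    split_ifs <;> omega
  have hminus : n - Pi.single j 1 ∈ boxF d 0 ((N : ℤ) - 1) := by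
    rw [mem_boxF]; intro k
    have := hn k
    simp only [Pi.sub_apply, Pi.single_apply]
    split_ifs <;> omega
  unfold wv
  rw [if_pos hmem, if_pos hplus, if_pos hminus, sum_add_single, sum_sub_single]
  set S : ℤ := ∑ k : Fin d, n k with hS
  have e1 : ((θ * ((S + 1 : ℤ) : ℝ) : ℝ) : ℂ) * Complex.I
      = ((θ * (S : ℝ) : ℝ) : ℂ) * Complex.I + (θ : ℂ) * Complex.I := by
    push_cast; ring
  have e2 : ((θ * ((S - 1 : ℤ) : ℝ) : ℝ) : ℂ) * Complex.I
      = ((θ * (S : ℝ) : ℝ) : ℂ) * Complex.I + -((θ : ℂ) * Complex.I) := by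
    push_cast; ring
  rw [e1, e2, Complex.exp_add, Complex.exp_add, ← mul_add, exp_add_exp_neg θ]
  ring

lemma res_apply (hL : IsDiscreteLaplacian d L) (l : ℂ) (θ : ℝ) (N : ℕ) (n : Fin d → ℤ) :
    (l • wvL d θ N - L (wvL d θ N)) n
      = l * wv d θ N n
        - (1 / 2) * ∑ j : Fin d, (wv d θ N (n + Pi.single j 1) + wv d θ N (n - Pi.single j 1)) := by
  rw [lp.coeFn_sub, Pi.sub_apply, lp.coeFn_smul, Pi.smul_apply, smul_eq_mul, hL]
  rfl

lemma res_interior (hL : IsDiscreteLaplacian d L) {l : ℂ} {θ : ℝ} {N : ℕ}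
    (him : l.im = 0) (hθ : (d : ℝ) * Real.cos θ = l.re) (hN : 3 ≤ N)
    {n : Fin d → ℤ} (hn : n ∈ boxF d 1 ((N : ℤ) - 2)) :
    (l • wvL d θ N - L (wvL d θ N)) n = 0 := by
  rw [res_apply hL]
  rw [Finset.sum_congr rfl fun j _ => wv_shift hN hn j]
  rw [Finset.sum_const, Finset.card_univ, Fintype.card_fin, nsmul_eq_mul]
  have hl : l = ((d * Real.cos θ : ℝ) : ℂ) := by
    rw [hθ, Complex.ext_iff]
    exact ⟨by simp, by simp [him]⟩
  rw [hl]
  push_cast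
  ring

lemma wv_zero_of_coord {d : ℕ} (θ : ℝ) (N : ℕ) {n : Fin d → ℤ} (j : Fin d)
    (h : ¬(0 ≤ n j ∧ n j ≤ (N : ℤ) - 1)) : wv d θ N n = 0 := by
  refine wv_eq_zero θ N fun hmem => ?_
  exact h ((mem_boxF.1 hmem) j)

lemma res_outer (hL : IsDiscreteLaplacian d L) (l : ℂ) (θ : ℝ) (N : ℕ)
    {n : Fin d → ℤ} (hn : n ∉ boxF d (-1) (N : ℤ)) :
    (l • wvL d θ N - L (wvL d θ N)) n = 0 := by
  rw [res_apply hL]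
  simp only [mem_boxF, not_forall] at hn
  obtain ⟨j, hj⟩ := hn
  rw [not_and_or, not_le, not_le] at hj
  have h0 : wv d θ N n = 0 := wv_zero_of_coord θ N j (by omega)
  have hsum : ∀ k : Fin d,
      wv d θ N (n + Pi.single k 1) + wv d θ N (n - Pi.single k 1) = 0 := by
    intro k
    have hp : wv d θ N (n + Pi.single k 1) = 0 := by
      refine wv_zero_of_coord θ N j ?_
      simp only [Pi.add_apply, Pi.single_apply]
      split_ifs <;> omega
    have hm : wv d θ N (n - Pi.single k 1) = 0 := by
      refine wv_zero_of_coord θ N j ?_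
      simp only [Pi.sub_apply, Pi.single_apply]
      split_ifs <;> omega
    rw [hp, hm, add_zero]
  rw [Finset.sum_congr rfl fun k _ => hsum k, Finset.sum_const, h0]
  simp

lemma res_bound (hL : IsDiscreteLaplacian d L) {l : ℂ} (θ : ℝ) (N : ℕ)
    (hnl : ‖l‖ ≤ (d : ℝ)) (n : Fin d → ℤ) :
    ‖(l • wvL d θ N - L (wvL d θ N)) n‖ ≤ 2 * d := by
  rw [res_apply hL]
  refine (norm_sub_le _ _).trans ?_
  have h1 : ‖l * wv d θ N n‖ ≤ (d : ℝ) := by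
    rw [norm_mul]
    calc ‖l‖ * ‖wv d θ N n‖ ≤ (d : ℝ) * 1 :=
      mul_le_mul hnl (wv_norm_le θ N n) (norm_nonneg _) (by positivity)
    _ = d := mul_one _
  have h2 : ‖(1 / 2 : ℂ) * ∑ j : Fin d,
      (wv d θ N (n + Pi.single j 1) + wv d θ N (n - Pi.single j 1))‖ ≤ (d : ℝ) := by
    rw [norm_mul]
    have : ‖∑ j : Fin d, (wv d θ N (n + Pi.single j 1) + wv d θ N (n - Pi.single j 1))‖
        ≤ 2 * d := by
      refine (norm_sum_le _ _).trans ?_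
      calc ∑ j : Fin d, ‖wv d θ N (n + Pi.single j 1) + wv d θ N (n - Pi.single j 1)‖
          ≤ ∑ _j : Fin d, (2 : ℝ) := by
            refine Finset.sum_le_sum fun j _ => ?_
            refine (norm_add_le _ _).trans ?_
            have := wv_norm_le (d := d) θ N (n + Pi.single j 1)
            have := wv_norm_le (d := d) θ N (n - Pi.single j 1)
            linarith
        _ = 2 * d := by simp [Finset.sum_const, Finset.card_univ]; ring
    calc ‖(1 / 2 : ℂ)‖ * ‖∑ j : Fin d, (wv d θ N (n + Pi.single j 1) + wv d θ N (n - Pi.single j 1))‖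
        ≤ (1 / 2 : ℝ) * (2 * d) := by
          refine mul_le_mul (le_of_eq (by norm_num)) this (norm_nonneg _) (by norm_num)
      _ = d := by ring
  linarith

lemma card_E_le {d : ℕ} {N : ℕ} (hN : 3 ≤ N) :
    ((boxF d (-1) (N : ℤ)) \ (boxF d 1 ((N : ℤ) - 2))).card ≤ 4 * (N + 2) ^ (d - 1) * d := by
  classical
  set A : Finset ℤ := Finset.Icc (-1 : ℤ) (N : ℤ) \ Finset.Icc 1 ((N : ℤ) - 2) with hA
  have hsub : Finset.Icc (1 : ℤ) ((N : ℤ) - 2) ⊆ Finset.Icc (-1 : ℤ) (N : ℤ) :=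
    Finset.Icc_subset_Icc (by omega) (by omega)
  have hcardA : A.card = 4 := by
    rw [hA, Finset.card_sdiff_of_subset hsub, Int.card_Icc, Int.card_Icc]
    omega
  have hcardB : (Finset.Icc (-1 : ℤ) (N : ℤ)).card = N + 2 := by
    rw [Int.card_Icc]; omega
  set U : Finset (Fin d → ℤ) := Finset.univ.biUnion fun j : Fin d =>
    Fintype.piFinset fun k => if k = j then A else Finset.Icc (-1 : ℤ) (N : ℤ) with hU
  have hEU : (boxF d (-1) (N : ℤ)) \ (boxF d 1 ((N : ℤ) - 2)) ⊆ U := by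
    intro n hn
    rw [Finset.mem_sdiff] at hn
    obtain ⟨h1, h2⟩ := hn
    rw [mem_boxF] at h1
    have : ∃ j, ¬ (1 ≤ n j ∧ n j ≤ (N : ℤ) - 2) := by
      by_contra hc
      push_neg at hc
      exact h2 (mem_boxF.2 fun j => hc j)
    obtain ⟨j, hj⟩ := this
    rw [hU, Finset.mem_biUnion]
    refine ⟨j, Finset.mem_univ j, ?_⟩
    rw [Fintype.mem_piFinset]
    intro k
    by_cases hk : k = j
    · subst hk
      rw [if_pos rfl, hA, Finset.mem_sdiff]
      exact ⟨Finset.mem_Icc.2 (h1 k), fun hm => hj (Finset.mem_Icc.1 hm)⟩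
    · rw [if_neg hk]
      exact Finset.mem_Icc.2 (h1 k)
  refine (Finset.card_le_card hEU).trans ?_
  refine (Finset.card_biUnion_le).trans ?_
  have hj : ∀ j : Fin d,
      (Fintype.piFinset fun k => if k = j then A else Finset.Icc (-1 : ℤ) (N : ℤ)).card
        = 4 * (N + 2) ^ (d - 1) := by
    intro j
    rw [Fintype.card_piFinset]
    rw [← Finset.mul_prod_erase Finset.univ _ (Finset.mem_univ j), if_pos rfl, hcardA]
    congr 1
    rw [Finset.prod_congr rfl fun k hk => by
      rw [if_neg (Finset.ne_of_mem_erase hk), hcardB]]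
    rw [Finset.prod_const, Finset.card_erase_of_mem (Finset.mem_univ j), Finset.card_univ,
      Fintype.card_fin]
  rw [Finset.sum_congr rfl fun j _ => hj j, Finset.sum_const, Finset.card_univ, Fintype.card_fin,
    smul_eq_mul]
  rw [mul_comm]

lemma spec_supset (hd : 1 ≤ d) (hL : IsDiscreteLaplacian d L) :
    {l : ℂ | l.im = 0 ∧ |l.re| ≤ d} ⊆ spectrum ℂ L := by
  rintro l ⟨him, hre⟩
  by_contra hns
  rw [spectrum.notMem_iff] at hns
  set B : lp (fun _ : Fin d → ℤ => ℂ) 2 →L[ℂ] lp (fun _ : Fin d → ℤ => ℂ) 2 :=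
    ↑hns.unit⁻¹ with hB
  have key : ∀ f : lp (fun _ : Fin d → ℤ => ℂ) 2, ‖f‖ ≤ ‖B‖ * ‖l • f - L f‖ := by
    intro f
    have h1 : B ((algebraMap ℂ _ l - L) f) = f := by
      calc B ((algebraMap ℂ _ l - L) f)
          = (B * (algebraMap ℂ _ l - L)) f := rfl
        _ = ((1 : lp (fun _ : Fin d → ℤ => ℂ) 2 →L[ℂ] lp (fun _ : Fin d → ℤ => ℂ) 2)) f := by
            have hop : ((↑hns.unit⁻¹ :
                lp (fun _ : Fin d → ℤ => ℂ) 2 →L[ℂ] lp (fun _ : Fin d → ℤ => ℂ) 2)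
                  * (algebraMap ℂ _ l - L)) = 1 := by
              exact hns.val_inv_mul
            rw [hB]
            exact DFunLike.congr_fun hop f
        _ = f := rfl
    have h2 : (algebraMap ℂ _ l - L) f = l • f - L f := by
      rw [ContinuousLinearMap.sub_apply, Algebra.algebraMap_eq_smul_one,
        ContinuousLinearMap.smul_apply, ContinuousLinearMap.one_apply]
    calc ‖f‖ = ‖B ((algebraMap ℂ _ l - L) f)‖ := by rw [h1]
      _ ≤ ‖B‖ * ‖(algebraMap ℂ _ l - L) f‖ := B.le_opNorm _
      _ = ‖B‖ * ‖l • f - L f‖ := by rw [h2]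
  have hd0 : (0 : ℝ) < d := by exact_mod_cast hd
  rw [abs_le] at hre
  have hdiv1 : l.re / d ≤ 1 := (div_le_one hd0).2 hre.2
  have hdiv2 : -1 ≤ l.re / d := by
    rw [le_div_iff₀ hd0]
    linarith [hre.1]
  set θ := Real.arccos (l.re / d) with hθdef
  have hθ : (d : ℝ) * Real.cos θ = l.re := by
    rw [hθdef, Real.cos_arccos hdiv2 hdiv1]
    field_simp
  have hleq : l = ((l.re : ℝ) : ℂ) := by
    rw [Complex.ext_iff]
    exact ⟨by simp, by simp [him]⟩
  have hnl : ‖l‖ ≤ (d : ℝ) := by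
    rw [hleq, Complex.norm_real, Real.norm_eq_abs]
    rw [abs_le]
    exact hre
  set C : ℝ := ‖B‖ ^ 2 * (16 * d ^ 3 * 3 ^ (d - 1)) with hC
  set N : ℕ := ⌈C⌉₊ + 5 with hNdef
  have hN3 : 3 ≤ N := by omega
  have hN1 : 1 ≤ N := by omega
  have hNC : C < N := by
    calc C ≤ ⌈C⌉₊ := Nat.le_ceil C
      _ < N := by exact_mod_cast Nat.lt_succ_of_le (by omega)
  set W := wvL d θ N with hW
  set R := l • W - L W with hR
  have hWsq : ‖W‖ ^ 2 = (N : ℝ) ^ d := norm_wvL_sq d θ hN1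
  have hRsq : ‖R‖ ^ 2 ≤ (4 * ((N : ℝ) + 2) ^ (d - 1) * d) * (2 * d) ^ 2 := by
    rw [hR, hW, norm_sq_eq]
    rw [tsum_eq_sum (s := (boxF d (-1) (N : ℤ)) \ (boxF d 1 ((N : ℤ) - 2)))
      (fun n hn => ?_)]
    · refine le_trans (Finset.sum_le_card_nsmul _ _ ((2 * (d : ℝ)) ^ 2) fun n _ => ?_) ?_
      · refine pow_le_pow_left₀ (norm_nonneg _) ?_ 2
        exact res_bound hL θ N hnl n
      · rw [nsmul_eq_mul]
        refine mul_le_mul_of_nonneg_right ?_ (by positivity)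
        calc (((boxF d (-1) (N : ℤ)) \ (boxF d 1 ((N : ℤ) - 2))).card : ℝ)
            ≤ ((4 * (N + 2) ^ (d - 1) * d : ℕ) : ℝ) := by exact_mod_cast card_E_le hN3
          _ = 4 * ((N : ℝ) + 2) ^ (d - 1) * d := by push_cast; ring
    · rw [Finset.mem_sdiff, not_and_or, not_not] at hn
      rcases hn with hn | hn
      · rw [res_outer hL l θ N hn]
        simp
      · rw [res_interior hL him hθ hN3 hn]
        simp
  have hsq : (N : ℝ) ^ d ≤ ‖B‖ ^ 2 * ‖R‖ ^ 2 := by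
    rw [← hWsq]
    calc ‖W‖ ^ 2 ≤ (‖B‖ * ‖R‖) ^ 2 := pow_le_pow_left₀ (norm_nonneg W) (key W) 2
      _ = ‖B‖ ^ 2 * ‖R‖ ^ 2 := by ring
  have hfin : (N : ℝ) ^ d ≤ C * (N : ℝ) ^ (d - 1) := by
    refine hsq.trans ?_
    calc ‖B‖ ^ 2 * ‖R‖ ^ 2
        ≤ ‖B‖ ^ 2 * ((4 * ((N : ℝ) + 2) ^ (d - 1) * d) * (2 * d) ^ 2) := by
          exact mul_le_mul_of_nonneg_left hRsq (by positivity)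
      _ = ‖B‖ ^ 2 * (16 * d ^ 3) * ((N : ℝ) + 2) ^ (d - 1) := by ring
      _ ≤ ‖B‖ ^ 2 * (16 * d ^ 3) * ((3 : ℝ) * N) ^ (d - 1) := by
          refine mul_le_mul_of_nonneg_left (pow_le_pow_left₀ (by positivity) ?_ _) (by positivity)
          have : (1 : ℝ) ≤ N := by exact_mod_cast hN1
          linarith
      _ = C * (N : ℝ) ^ (d - 1) := by rw [hC, mul_pow]; ring
  have hNpos : (0 : ℝ) < (N : ℝ) ^ (d - 1) := by positivity
  have hpow : (N : ℝ) ^ d = (N : ℝ) * (N : ℝ) ^ (d - 1) := by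
    rw [← pow_succ']
    congr 1
    omega
  rw [hpow] at hfin
  have : (N : ℝ) ≤ C := le_of_mul_le_mul_right (by linarith) hNpos
  linarith


/-- For every `d ≥ 1`, the spectrum of the discrete Laplacian on
`ℓ²(ℤᵈ)` equals `[-d,d] = {λ ∈ ℂ : Im λ = 0, |Re λ| ≤ d}`. -/
theorem statement19 (d : ℕ) (hd : 1 ≤ d)
    (L : lp (fun _ : Fin d → ℤ => ℂ) 2 →L[ℂ] lp (fun _ : Fin d → ℤ => ℂ) 2)
    (hL : IsDiscreteLaplacian d L) :
    spectrum ℂ L = {l : ℂ | l.im = 0 ∧ |l.re| ≤ d} := by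
  exact Set.Subset.antisymm (spec_subset hL) (spec_supset hd hL)

end
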